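/- Let n ≥ 1, r ≥ 0 and t ≥ max(n, r) be integers. The set {((a,b;c,d), z) ∈ U^H₁(p^t) : b ∈ pⁿℤ_p and a − z ∈ pⁿℤ_p} (which equals U^H₁(p^t) ∩ ι^{−1}(u U_{n,p} u^{−1})) is a subgroup of U^H₁(p^t) of index p^{2n−1}(p−1). -/

import Mathlib

/-- The level group `U^H₁(p^t) ⊂ GL₂(ℤ_p) × ℤ_p^×`: pairs `((a,b;c,d), z)` with
`c ∈ p^tℤ_p` and `d ∈ 1 + p^tℤ_p`. -/
def UH1 (p : ℕ) [Fact p.Prime] (t : ℕ) : Set ((Matrix (Fin 2) (Fin 2) ℤ_[p])ˣ × ℤ_[p]ˣ) :=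
  {x | (p : ℤ_[p]) ^ t ∣ (x.1 : Matrix (Fin 2) (Fin 2) ℤ_[p]) 1 0 ∧
       (p : ℤ_[p]) ^ t ∣ ((x.1 : Matrix (Fin 2) (Fin 2) ℤ_[p]) 1 1 - 1)}

/-- The subset `U^H₁(p^t) ∩ ι^{−1}(u U_{n,p} u^{−1})`, i.e. those `((a,b;c,d), z) ∈ U^H₁(p^t)`
with `b ≡ 0 (mod pⁿℤ_p)` and `a ≡ z (mod pⁿℤ_p)`. -/
def UHcap (p : ℕ) [Fact p.Prime] (t n : ℕ) : Set ((Matrix (Fin 2) (Fin 2) ℤ_[p])ˣ × ℤ_[p]ˣ) :=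
  {x | x ∈ UH1 p t ∧
       (p : ℤ_[p]) ^ n ∣ (x.1 : Matrix (Fin 2) (Fin 2) ℤ_[p]) 0 1 ∧
       (p : ℤ_[p]) ^ n ∣ ((x.1 : Matrix (Fin 2) (Fin 2) ℤ_[p]) 0 0 - (x.2 : ℤ_[p]))}

namespace Stmt2Aux

variable {p : ℕ} [hp : Fact p.Prime]

local notation "G" => (Matrix (Fin 2) (Fin 2) ℤ_[p])ˣ × ℤ_[p]ˣ

lemma dvd_iff_pi (m : ℕ) (x : ℤ_[p]) :
    (p : ℤ_[p]) ^ m ∣ x ↔ PadicInt.toZModPow m x = 0 := by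
  rw [← Ideal.mem_span_singleton, ← PadicInt.ker_toZModPow, RingHom.mem_ker]

lemma dvd_iff_pi' (m : ℕ) (x y : ℤ_[p]) :
    (p : ℤ_[p]) ^ m ∣ x - y ↔ PadicInt.toZModPow m x = PadicInt.toZModPow m y := by
  rw [dvd_iff_pi, map_sub, sub_eq_zero]

/-- the subgroup with carrier `UH1 p t`. -/
def Usub (t : ℕ) : Subgroup G where
  carrier := UH1 p t
  one_mem' := by
    constructor <;> simp [Matrix.one_apply]
  mul_mem' := by
    rintro x y ⟨hc, hd⟩ ⟨hc', hd'⟩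
    have h1 : ((x * y).1 : Matrix (Fin 2) (Fin 2) ℤ_[p]) =
        (x.1 : Matrix (Fin 2) (Fin 2) ℤ_[p]) * (y.1 : Matrix (Fin 2) (Fin 2) ℤ_[p]) := by
      rw [Prod.fst_mul, Units.val_mul]
    constructor
    · rw [h1, Matrix.mul_apply, Fin.sum_univ_two]
      exact dvd_add (hc.mul_right _) (hc'.mul_left _)
    · rw [h1, Matrix.mul_apply, Fin.sum_univ_two]
      set M := (x.1 : Matrix (Fin 2) (Fin 2) ℤ_[p])
      set N := (y.1 : Matrix (Fin 2) (Fin 2) ℤ_[p])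
      have : M 1 0 * N 0 1 + M 1 1 * N 1 1 - 1 =
          M 1 0 * N 0 1 + (M 1 1 - 1) * N 1 1 + (N 1 1 - 1) := by ring
      rw [this]
      exact dvd_add (dvd_add (hc.mul_right _) (hd.mul_right _)) hd'
  inv_mem' := by
    rintro x ⟨hc, hd⟩
    set M := (x.1 : Matrix (Fin 2) (Fin 2) ℤ_[p]) with hM
    set N := ((x⁻¹).1 : Matrix (Fin 2) (Fin 2) ℤ_[p]) with hN
    have hMN : M * N = 1 := by
      rw [hM, hN, Prod.fst_inv, ← Units.val_mul, mul_inv_cancel, Units.val_one]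
    have h10 : M 1 0 * N 0 0 + M 1 1 * N 1 0 = 0 := by
      have := congrArg (fun A => A 1 0) hMN
      simpa [Matrix.mul_apply, Fin.sum_univ_two, Matrix.one_apply] using this
    have h11 : M 1 0 * N 0 1 + M 1 1 * N 1 1 = 1 := by
      have := congrArg (fun A => A 1 1) hMN
      simpa [Matrix.mul_apply, Fin.sum_univ_two, Matrix.one_apply] using this
    constructor
    · show (p : ℤ_[p]) ^ t ∣ N 1 0
      have e : N 1 0 = -(M 1 0 * N 0 0) - (M 1 1 - 1) * N 1 0 := by linear_combination h10
      rw [e]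
      exact dvd_sub (dvd_neg.mpr (hc.mul_right _)) (hd.mul_right _)
    · show (p : ℤ_[p]) ^ t ∣ N 1 1 - 1
      have e : N 1 1 - 1 = -(M 1 0 * N 0 1) - (M 1 1 - 1) * N 1 1 := by linear_combination h11
      rw [e]
      exact dvd_sub (dvd_neg.mpr (hc.mul_right _)) (hd.mul_right _)


lemma mem_Usub {t : ℕ} {x : G} : x ∈ Usub (p := p) t ↔ x ∈ UH1 p t := Iff.rfl

/-- the subgroup with carrier `UHcap p t n`. -/
def Ksub (t n : ℕ) (hnt : n ≤ t) : Subgroup G where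
  carrier := UHcap p t n
  one_mem' := by
    refine ⟨(Usub t).one_mem, ?_, ?_⟩ <;> simp [Matrix.one_apply]
  mul_mem' := by
    rintro x y ⟨hU, hb, ha⟩ ⟨hU', hb', ha'⟩
    refine ⟨(Usub t).mul_mem hU hU', ?_, ?_⟩
    all_goals
      set M := (x.1 : Matrix (Fin 2) (Fin 2) ℤ_[p]) with hM
      set N := (y.1 : Matrix (Fin 2) (Fin 2) ℤ_[p]) with hN
      have h1 : ((x * y).1 : Matrix (Fin 2) (Fin 2) ℤ_[p]) = M * N := by
        rw [hM, hN, Prod.fst_mul, Units.val_mul]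
      have h2 : (((x * y).2 : ℤ_[p])) = (x.2 : ℤ_[p]) * (y.2 : ℤ_[p]) := by
        rw [Prod.snd_mul, Units.val_mul]
    · rw [h1, Matrix.mul_apply, Fin.sum_univ_two]
      exact dvd_add (hb'.mul_left _) (hb.mul_right _)
    · rw [h1, h2, Matrix.mul_apply, Fin.sum_univ_two]
      have e : M 0 0 * N 0 0 + M 0 1 * N 1 0 - (x.2 : ℤ_[p]) * (y.2 : ℤ_[p]) =
          M 0 0 * (N 0 0 - (y.2 : ℤ_[p])) + (M 0 0 - (x.2 : ℤ_[p])) * (y.2 : ℤ_[p])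
            + M 0 1 * N 1 0 := by ring
      rw [e]
      exact dvd_add (dvd_add (ha'.mul_left _) (ha.mul_right _)) (hb.mul_right _)
  inv_mem' := by
    rintro x ⟨hU, hb, ha⟩
    obtain ⟨hc, hd⟩ := id hU
    refine ⟨(Usub t).inv_mem hU, ?_, ?_⟩
    all_goals
      set M := (x.1 : Matrix (Fin 2) (Fin 2) ℤ_[p]) with hM
      set N := ((x⁻¹).1 : Matrix (Fin 2) (Fin 2) ℤ_[p]) with hN
      set z := ((x.2 : ℤ_[p])) with hz
      set w := (((x⁻¹).2 : ℤ_[p])) with hw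
      have hNM : N * M = 1 := by
        rw [hM, hN, Prod.fst_inv, ← Units.val_mul, inv_mul_cancel, Units.val_one]
      have hzw : z * w = 1 := by
        rw [hz, hw, Prod.snd_inv, ← Units.val_mul, mul_inv_cancel, Units.val_one]
      have hcn : (p : ℤ_[p]) ^ n ∣ M 1 0 := (pow_dvd_pow _ hnt).trans hc
      have hdn : (p : ℤ_[p]) ^ n ∣ M 1 1 - 1 := (pow_dvd_pow _ hnt).trans hd
      have h01 : N 0 0 * M 0 1 + N 0 1 * M 1 1 = 0 := by
        have := congrArg (fun A => A 0 1) hNM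
        simpa [Matrix.mul_apply, Fin.sum_univ_two, Matrix.one_apply] using this
      have h00 : N 0 0 * M 0 0 + N 0 1 * M 1 0 = 1 := by
        have := congrArg (fun A => A 0 0) hNM
        simpa [Matrix.mul_apply, Fin.sum_univ_two, Matrix.one_apply] using this
    · show (p : ℤ_[p]) ^ n ∣ N 0 1
      have e : N 0 1 = -(N 0 0 * M 0 1) - N 0 1 * (M 1 1 - 1) := by linear_combination h01
      rw [e]
      exact dvd_sub (dvd_neg.mpr (hb.mul_left _)) (hdn.mul_left _)
    · show (p : ℤ_[p]) ^ n ∣ N 0 0 - w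
      have key : z * (N 0 0 - w) = -(N 0 0 * (M 0 0 - z)) - N 0 1 * M 1 0 := by
        linear_combination h00 - hzw
      have h1 : (p : ℤ_[p]) ^ n ∣ z * (N 0 0 - w) := by
        rw [key]
        exact dvd_sub (dvd_neg.mpr (ha.mul_left _)) (hcn.mul_left _)
      have h2 : w * (z * (N 0 0 - w)) = N 0 0 - w := by linear_combination (N 0 0 - w) * hzw
      exact h2 ▸ h1.mul_left w


open PadicInt in
lemma pi_surj (n : ℕ) : Function.Surjective (PadicInt.toZModPow (p := p) n) := by
  intro β
  obtain ⟨m, hm⟩ := ZMod.intCast_surjective (n := p ^ n) β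
  exact ⟨(m : ℤ_[p]), by rw [map_intCast, hm]⟩

lemma isUnit_of_toZModPow {m : ℕ} (hm : 1 ≤ m) (x : ℤ_[p])
    (h : IsUnit (PadicInt.toZModPow m x)) : IsUnit x := by
  by_contra hx
  rw [PadicInt.not_isUnit_iff, PadicInt.norm_lt_one_iff_dvd] at hx
  have h1 : PadicInt.toZModPow 1 x = 0 := by
    rw [← dvd_iff_pi]; simpa using hx
  have h2 : IsUnit (PadicInt.toZModPow 1 x) := by
    rw [← PadicInt.cast_toZModPow 1 m hm x]
    exact h.map (ZMod.castHom (pow_dvd_pow p hm) (ZMod (p ^ 1)))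
  haveI : Fact (1 < p ^ 1) := ⟨by simpa using hp.out.one_lt⟩
  rw [h1] at h2
  exact not_isUnit_zero h2

/-- The comparison map. -/
noncomputable def Fmap (n : ℕ) (x : G) : (ZMod (p ^ n))ˣ × ZMod (p ^ n) :=
  (Units.map (PadicInt.toZModPow n).toMonoidHom
      ((x.2)⁻¹ * Units.map (Matrix.detMonoidHom (n := Fin 2) (R := ℤ_[p])) x.1),
    PadicInt.toZModPow n ((x.1 : Matrix (Fin 2) (Fin 2) ℤ_[p]) 0 1))

lemma Fmap_fst_val (n : ℕ) (x : G) : (((Fmap n x).1 : (ZMod (p ^ n))ˣ) : ZMod (p ^ n)) =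
    PadicInt.toZModPow n ((x.2⁻¹ : ℤ_[p]ˣ) : ℤ_[p]) *
      PadicInt.toZModPow n ((x.1 : Matrix (Fin 2) (Fin 2) ℤ_[p]).det) := by
  simp [Fmap, Matrix.coe_detMonoidHom]

lemma Fmap_mul_K {t n : ℕ} (hnt : n ≤ t) (x k : G) (hk : k ∈ UHcap p t n) :
    Fmap n (x * k) = Fmap n x := by
  obtain ⟨⟨hγ', hδ'⟩, hβ', hα'⟩ := hk
  set π := PadicInt.toZModPow (p := p) n with hπ
  set Km := (k.1 : Matrix (Fin 2) (Fin 2) ℤ_[p]) with hKm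
  set M := (x.1 : Matrix (Fin 2) (Fin 2) ℤ_[p]) with hM
  have hβ : π (Km 0 1) = 0 := (dvd_iff_pi n _).mp hβ'
  have hα : π (Km 0 0) = π ((k.2 : ℤ_[p])) := (dvd_iff_pi' n _ _).mp hα'
  have hγ : π (Km 1 0) = 0 := (dvd_iff_pi n _).mp ((pow_dvd_pow _ hnt).trans hγ')
  have hδ : π (Km 1 1) = 1 := by
    have := (dvd_iff_pi' n _ 1).mp ((pow_dvd_pow _ hnt).trans hδ')
    rwa [map_one] at this
  have hki : π ((k.2 : ℤ_[p])) * π (((k.2)⁻¹ : ℤ_[p]ˣ) : ℤ_[p]) = 1 := by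
    rw [← map_mul, ← Units.val_mul, mul_inv_cancel, Units.val_one, map_one]
  have hdet : π (Km.det) = π ((k.2 : ℤ_[p])) := by
    rw [Matrix.det_fin_two, map_sub, map_mul, map_mul]
    linear_combination (π (Km 0 0)) * hδ + hα - (π (Km 0 1)) * hγ
  refine Prod.ext (Units.ext ?_) ?_
  · rw [Fmap_fst_val, Fmap_fst_val]
    have h1 : (((x * k).2⁻¹ : ℤ_[p]ˣ) : ℤ_[p]) =
        ((x.2⁻¹ : ℤ_[p]ˣ) : ℤ_[p]) * (((k.2)⁻¹ : ℤ_[p]ˣ) : ℤ_[p]) := by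
      rw [Prod.snd_mul, mul_inv, Units.val_mul]
    have h2 : ((x * k).1 : Matrix (Fin 2) (Fin 2) ℤ_[p]).det = M.det * Km.det := by
      rw [Prod.fst_mul, Units.val_mul, Matrix.det_mul]
    rw [h1, h2, map_mul, map_mul]
    linear_combination (π ((x.2⁻¹ : ℤ_[p]ˣ) : ℤ_[p]) * π (((k.2)⁻¹ : ℤ_[p]ˣ) : ℤ_[p]) *
        π (M.det)) * hdet + (π ((x.2⁻¹ : ℤ_[p]ˣ) : ℤ_[p]) * π (M.det)) * hki
  · show π (((x * k).1 : Matrix (Fin 2) (Fin 2) ℤ_[p]) 0 1) = π (M 0 1)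
    have h2 : ((x * k).1 : Matrix (Fin 2) (Fin 2) ℤ_[p]) = M * Km := by
      rw [Prod.fst_mul, Units.val_mul]
    rw [h2, Matrix.mul_apply, Fin.sum_univ_two, map_add, map_mul, map_mul]
    linear_combination (π (M 0 0)) * hβ + (π (M 0 1)) * hδ

lemma Fmap_inj {t n : ℕ} (hnt : n ≤ t) (x y : G) (hx : x ∈ UH1 p t) (hy : y ∈ UH1 p t)
    (h : Fmap n x = Fmap n y) : x⁻¹ * y ∈ UHcap p t n := by
  set π := PadicInt.toZModPow (p := p) n with hπ
  set M := (x.1 : Matrix (Fin 2) (Fin 2) ℤ_[p]) with hM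
  set M' := (y.1 : Matrix (Fin 2) (Fin 2) ℤ_[p]) with hM'
  set N := ((x⁻¹).1 : Matrix (Fin 2) (Fin 2) ℤ_[p]) with hN
  have hxinv : x⁻¹ ∈ UH1 p t := (Usub (p := p) t).inv_mem hx
  have hC : π (M 1 1) = 1 := by
    have := (dvd_iff_pi' n _ 1).mp ((pow_dvd_pow _ hnt).trans hx.2); rwa [map_one] at this
  have hF : π (M 1 0) = 0 := (dvd_iff_pi n _).mp ((pow_dvd_pow _ hnt).trans hx.1)
  have hC' : π (M' 1 1) = 1 := by
    have := (dvd_iff_pi' n _ 1).mp ((pow_dvd_pow _ hnt).trans hy.2); rwa [map_one] at this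
  have hE : π (M' 1 0) = 0 := (dvd_iff_pi n _).mp ((pow_dvd_pow _ hnt).trans hy.1)
  have hNM : N * M = 1 := by
    rw [hN, hM, Prod.fst_inv, ← Units.val_mul, inv_mul_cancel, Units.val_one]
  have e00 : π (N 0 0) * π (M 0 0) + π (N 0 1) * π (M 1 0) = 1 := by
    have h0 := congrArg (fun A => A 0 0) hNM
    simp only [Matrix.mul_apply, Fin.sum_univ_two, Matrix.one_apply_eq] at h0
    have := congrArg π h0
    simpa [map_add, map_mul] using this
  have e01 : π (N 0 0) * π (M 0 1) + π (N 0 1) * π (M 1 1) = 0 := by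
    have h0 := congrArg (fun A => A 0 1) hNM
    simp only [Matrix.mul_apply, Fin.sum_univ_two] at h0
    have := congrArg π h0
    simpa [map_add, map_mul, Matrix.one_apply] using this
  have hF2 : π (M 0 1) = π (M' 0 1) := congrArg Prod.snd h
  have hF1 : π ((x.2⁻¹ : ℤ_[p]ˣ) : ℤ_[p]) * (π (M 0 0) * π (M 1 1) - π (M 0 1) * π (M 1 0)) =
      π ((y.2⁻¹ : ℤ_[p]ˣ) : ℤ_[p]) * (π (M' 0 0) * π (M' 1 1) - π (M' 0 1) * π (M' 1 0)) := by
    have h1 : (((Fmap n x).1 : (ZMod (p ^ n))ˣ) : ZMod (p ^ n)) =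
        (((Fmap n y).1 : (ZMod (p ^ n))ˣ) : ZMod (p ^ n)) := by rw [h]
    rw [Fmap_fst_val, Fmap_fst_val] at h1
    rw [← hM, ← hM'] at h1
    rw [Matrix.det_fin_two, Matrix.det_fin_two, map_sub, map_sub, map_mul, map_mul, map_mul,
      map_mul] at h1
    exact h1
  have hzy : π ((y.2 : ℤ_[p])) * π ((y.2⁻¹ : ℤ_[p]ˣ) : ℤ_[p]) = 1 := by
    rw [← map_mul, ← Units.val_mul, mul_inv_cancel, Units.val_one, map_one]
  have s2 : π (N 0 0) * π (M 0 0) = 1 := by linear_combination e00 - π (N 0 1) * hF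
  have s3 : π ((x.2⁻¹ : ℤ_[p]ˣ) : ℤ_[p]) * π (M 0 0) =
      π ((y.2⁻¹ : ℤ_[p]ˣ) : ℤ_[p]) * π (M' 0 0) := by
    linear_combination hF1 - π ((x.2⁻¹ : ℤ_[p]ˣ) : ℤ_[p]) * π (M 0 0) * hC +
      π ((x.2⁻¹ : ℤ_[p]ˣ) : ℤ_[p]) * π (M 0 1) * hF +
      π ((y.2⁻¹ : ℤ_[p]ˣ) : ℤ_[p]) * π (M' 0 0) * hC' -
      π ((y.2⁻¹ : ℤ_[p]ˣ) : ℤ_[p]) * π (M' 0 1) * hE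
  have hmul1 : ((x⁻¹ * y).1 : Matrix (Fin 2) (Fin 2) ℤ_[p]) = N * M' := by
    rw [Prod.fst_mul, Units.val_mul]
  have hmul2 : (((x⁻¹ * y).2 : ℤ_[p])) =
      ((x.2⁻¹ : ℤ_[p]ˣ) : ℤ_[p]) * ((y.2 : ℤ_[p])) := by
    rw [Prod.snd_mul, Units.val_mul, Prod.snd_inv]
  refine ⟨(Usub (p := p) t).mul_mem hxinv hy, ?_, ?_⟩
  · rw [dvd_iff_pi, hmul1, Matrix.mul_apply, Fin.sum_univ_two, map_add, map_mul, map_mul]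
    linear_combination π (N 0 1) * hC' + e01 - π (N 0 1) * hC - π (N 0 0) * hF2
  · rw [dvd_iff_pi, hmul1, hmul2, map_sub, Matrix.mul_apply, Fin.sum_univ_two, map_add,
      map_mul, map_mul, map_mul]
    linear_combination π (N 0 1) * hE + π ((y.2 : ℤ_[p])) * π ((x.2⁻¹ : ℤ_[p]ˣ) : ℤ_[p]) * s2 -
      π ((y.2 : ℤ_[p])) * π (N 0 0) * s3 - π (N 0 0) * π (M' 0 0) * hzy

lemma Fmap_surj {t n : ℕ} (hn : 1 ≤ n) (u : (ZMod (p ^ n))ˣ) (β : ZMod (p ^ n)) :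
    ∃ x : G, x ∈ UH1 p t ∧ Fmap n x = (u, β) := by
  obtain ⟨a, ha⟩ := pi_surj (p := p) n (u : ZMod (p ^ n))
  obtain ⟨b, hb⟩ := pi_surj (p := p) n β
  have haU : IsUnit a := isUnit_of_toZModPow hn a (by rw [ha]; exact u.isUnit)
  set M : Matrix (Fin 2) (Fin 2) ℤ_[p] := !![a, b; 0, 1] with hMdef
  have hdet : M.det = a := by simp [hMdef, Matrix.det_fin_two_of]
  have hMU : IsUnit M := (Matrix.isUnit_iff_isUnit_det M).mpr (hdet ▸ haU)
  refine ⟨(hMU.unit, 1), ⟨?_, ?_⟩, ?_⟩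
  · show (p : ℤ_[p]) ^ t ∣ (hMU.unit : Matrix (Fin 2) (Fin 2) ℤ_[p]) 1 0
    rw [hMU.unit_spec]
    simp [hMdef]
  · show (p : ℤ_[p]) ^ t ∣ (hMU.unit : Matrix (Fin 2) (Fin 2) ℤ_[p]) 1 1 - 1
    rw [hMU.unit_spec]
    simp [hMdef]
  · refine Prod.ext (Units.ext ?_) ?_
    · rw [Fmap_fst_val]
      show PadicInt.toZModPow n ((((1 : ℤ_[p]ˣ))⁻¹ : ℤ_[p]ˣ) : ℤ_[p]) *
        PadicInt.toZModPow n ((hMU.unit : Matrix (Fin 2) (Fin 2) ℤ_[p]).det) = ↑u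
      rw [hMU.unit_spec, hdet, inv_one, Units.val_one, map_one, one_mul, ha]
    · show PadicInt.toZModPow n ((hMU.unit : Matrix (Fin 2) (Fin 2) ℤ_[p]) 0 1) = β
      rw [hMU.unit_spec]
      simp [hMdef, hb]


lemma index_eq {t n : ℕ} (hn : 1 ≤ n) (hnt : n ≤ t) :
    ((Ksub (p := p) t n hnt).subgroupOf (Usub (p := p) t)).index =
      Nat.card ((ZMod (p ^ n))ˣ × ZMod (p ^ n)) := by
  rw [Subgroup.index_eq_card]
  apply Nat.card_congr
  refine Equiv.ofBijective
    (Quotient.lift (fun (x : ↥(Usub (p := p) t)) => Fmap n (x : G)) ?_) ⟨?_, ?_⟩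
  · intro a b hab
    have hab' := (QuotientGroup.leftRel_apply).mp hab
    rw [Subgroup.mem_subgroupOf] at hab'
    have hco : ((a⁻¹ * b : ↥(Usub (p := p) t)) : G) = ((a : G))⁻¹ * (b : G) := by
      simp
    rw [hco] at hab'
    have hb : (b : G) = (a : G) * (((a : G))⁻¹ * (b : G)) := by group
    show Fmap n (a : G) = Fmap n (b : G)
    rw [hb, Fmap_mul_K hnt _ _ hab']
  · intro q q'
    refine Quotient.inductionOn₂ q q' fun a b hfab => Quotient.sound
      ((QuotientGroup.leftRel_apply).mpr (Subgroup.mem_subgroupOf.mpr ?_))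
    have hco : ((a⁻¹ * b : ↥(Usub (p := p) t)) : G) = ((a : G))⁻¹ * (b : G) := by simp
    rw [hco]
    exact Fmap_inj hnt (a : G) (b : G) a.2 b.2 hfab
  · intro c
    obtain ⟨x, hx, hF⟩ := Fmap_surj (t := t) hn c.1 c.2
    exact ⟨QuotientGroup.mk ⟨x, hx⟩, by show Fmap n x = c; rw [hF]⟩

end Stmt2Aux

/-- **Index of the intersection level group.**
Let `n ≥ 1`, `r ≥ 0` and `t ≥ max(n, r)` be integers.  The set
`{((a,b;c,d), z) ∈ U^H₁(p^t) : b ∈ pⁿℤ_p and a − z ∈ pⁿℤ_p}` is a subgroup of `U^H₁(p^t)`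
of index `p^{2n−1}(p−1)`. -/


theorem stmt_2 (p : ℕ) [Fact p.Prime] (n r t : ℕ) (hn : 1 ≤ n) (ht : max n r ≤ t) :
    ∃ U K : Subgroup ((Matrix (Fin 2) (Fin 2) ℤ_[p])ˣ × ℤ_[p]ˣ),
      (U : Set ((Matrix (Fin 2) (Fin 2) ℤ_[p])ˣ × ℤ_[p]ˣ)) = UH1 p t ∧
      (K : Set ((Matrix (Fin 2) (Fin 2) ℤ_[p])ˣ × ℤ_[p]ˣ)) = UHcap p t n ∧
      K ≤ U ∧
      K.relIndex U = p ^ (2 * n - 1) * (p - 1) := by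
  have hnt : n ≤ t := le_trans (le_max_left n r) ht
  refine ⟨Stmt2Aux.Usub t, Stmt2Aux.Ksub t n hnt, rfl, rfl, fun x hx => hx.1, ?_⟩
  show ((Stmt2Aux.Ksub t n hnt).subgroupOf (Stmt2Aux.Usub t)).index = _
  rw [Stmt2Aux.index_eq hn hnt]
  haveI : NeZero (p ^ n) := ⟨pow_ne_zero n (Fact.out : p.Prime).ne_zero⟩
  rw [Nat.card_prod, Nat.card_eq_fintype_card, ZMod.card_units_eq_totient, Nat.card_zmod,
    Nat.totient_prime_pow (Fact.out : p.Prime) hn]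
  rw [show 2 * n - 1 = (n - 1) + n from by omega, pow_add]
  ring
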